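/- Let λ > 0 be real and let k, m ∈ ℕ. There exist real coefficients α_0, α_1, …, α_m (depending on λ, k, m) such that for all t ∈ ℝ, C^λ_{k+2m}(t) = ∑_{j=0}^{m} α_j · C^{λ+m}_{k+2(m−j)}(t), and the last coefficient is α_m = (−1)^m · (Γ(λ+m)/Γ(λ)) · (Γ(λ+k+m+1)/Γ(λ+k+2m+1)). -/

import Mathlib

/-- The Gegenbauer polynomial `C_k^λ(z)` given by its explicit sum. -/
noncomputable def gegenbauer (k : ℕ) (l : ℝ) (z : ℝ) : ℝ :=
  ∑ j ∈ Finset.range (k / 2 + 1),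
    (-1 : ℝ) ^ j * (Real.Gamma ((k : ℝ) - j + l) /
      (Real.Gamma l * (Nat.factorial j) * (Nat.factorial (k - 2 * j)))) * (2 * z) ^ (k - 2 * j)

lemma gegen_contig (l : ℝ) (hl : 0 < l) (k : ℕ) (t : ℝ) :
    gegenbauer (k + 2) l t = l / ((k : ℝ) + 2 + l) *
        (gegenbauer (k + 2) (l + 1) t - gegenbauer k (l + 1) t) := by
  have hden : (0:ℝ) < (k : ℝ) + 2 + l := by positivity
  have hGl : (0:ℝ) < Real.Gamma l := Real.Gamma_pos_of_pos hl
  have hGl1 : Real.Gamma (l + 1) = l * Real.Gamma l := Real.Gamma_add_one hl.ne'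
  have h2 : (k + 2) / 2 + 1 = (k / 2 + 1) + 1 := by omega
  unfold gegenbauer
  rw [h2]
  conv_lhs => rw [Finset.sum_range_succ']
  conv_rhs => rw [mul_sub, Finset.mul_sum, Finset.mul_sum, Finset.sum_range_succ']
  rw [add_sub_right_comm, ← Finset.sum_sub_distrib]
  have h0 : (-1 : ℝ) ^ 0 * (Real.Gamma (((k+2 : ℕ) : ℝ) - (0:ℕ) + l) /
      (Real.Gamma l * (Nat.factorial 0) * (Nat.factorial ((k+2) - 2 * 0)))) * (2 * t) ^ ((k+2) - 2 * 0)
      = l / ((k : ℝ) + 2 + l) *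
        ((-1 : ℝ) ^ 0 * (Real.Gamma (((k+2 : ℕ) : ℝ) - (0:ℕ) + (l+1)) /
      (Real.Gamma (l+1) * (Nat.factorial 0) * (Nat.factorial ((k+2) - 2 * 0)))) * (2 * t) ^ ((k+2) - 2 * 0)) := by
    have hG2 : Real.Gamma (((k+2 : ℕ) : ℝ) - (0:ℕ) + (l+1))
        = (((k:ℝ)) + 2 + l) * Real.Gamma (((k+2 : ℕ) : ℝ) - (0:ℕ) + l) := by
      have : (((k+2 : ℕ) : ℝ) - (0:ℕ) + (l+1)) = (((k+2 : ℕ) : ℝ) - (0:ℕ) + l) + 1 := by ring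
      have hpos0 : (0:ℝ) < ((k+2 : ℕ) : ℝ) - ((0:ℕ):ℝ) + l := by push_cast; linarith
      rw [this, Real.Gamma_add_one hpos0.ne']
      push_cast; ring
    rw [hG2, hGl1]
    field_simp
  rw [h0]
  congr 1
  apply Finset.sum_congr rfl
  intro j hj
  have hjk : j ≤ k / 2 := by simpa using Nat.lt_succ_iff.mp (Finset.mem_range.mp hj)
  have hjk' : 2 * j ≤ k := by omega
  have hnat : (k + 2) - 2 * (j + 1) = k - 2 * j := by omega
  have hGa : Real.Gamma (((k+2 : ℕ) : ℝ) - (j+1:ℕ) + (l+1))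
      = ((k:ℝ) - j + l + 1) * Real.Gamma ((k:ℝ) - j + (l+1)) := by
    have h1 : (((k+2 : ℕ) : ℝ) - (j+1:ℕ) + (l+1)) = ((k:ℝ) - j + (l+1)) + 1 := by push_cast; ring
    have hpos : (0:ℝ) < (k:ℝ) - j + (l+1) := by
      have : (j:ℝ) ≤ k := by exact_mod_cast (by omega : j ≤ k)
      linarith
    rw [h1, Real.Gamma_add_one hpos.ne']
    ring
  have hGL : Real.Gamma (((k+2 : ℕ) : ℝ) - (j+1:ℕ) + l) = Real.Gamma ((k:ℝ) - j + (l+1)) := by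
    congr 1; push_cast; ring
  have hfac : ((j+1).factorial : ℝ) = (j+1) * (j.factorial : ℝ) := by
    rw [Nat.factorial_succ]; push_cast; ring
  rw [hnat, hGa, hGL, hGl1, hfac]
  have hfj : (j.factorial : ℝ) ≠ 0 := by exact_mod_cast (Nat.factorial_ne_zero j)
  have hfk : (((k - 2*j).factorial : ℕ) : ℝ) ≠ 0 := by exact_mod_cast (Nat.factorial_ne_zero _)
  have hj1 : ((j:ℝ) + 1) ≠ 0 := by positivity
  field_simp
  ring

theorem stmt4aux : ∀ (m k : ℕ) (l : ℝ), 0 < l →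
    ∃ α : ℕ → ℝ,
      (∀ t : ℝ, gegenbauer (k + 2 * m) l t =
        ∑ j ∈ Finset.range (m + 1), α j * gegenbauer (k + 2 * (m - j)) (l + m) t) ∧
      α m = (-1 : ℝ) ^ m * (Real.Gamma (l + m) / Real.Gamma l) *
        (Real.Gamma (l + k + m + 1) / Real.Gamma (l + k + 2 * m + 1)) := by
  intro m
  induction m with
  | zero =>
    intro k l hl
    refine ⟨fun _ => 1, ?_, ?_⟩
    · intro t; simp
    · have h1 : Real.Gamma l ≠ 0 := (Real.Gamma_pos_of_pos hl).ne'
      have h2 : Real.Gamma (l + k + 1) ≠ 0 :=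
        (Real.Gamma_pos_of_pos (by positivity)).ne'
      simp [div_self h1, div_self h2]
  | succ n ih =>
    intro k l hl
    obtain ⟨β, hβ, hβn⟩ := ih (k + 2) (l + 1) (by linarith)
    obtain ⟨γ, hγ, hγn⟩ := ih k (l + 1) (by linarith)
    set c : ℝ := l / (((k + 2 * n : ℕ) : ℝ) + 2 + l) with hc
    have hcast : (l + 1) + (n : ℝ) = l + ((n + 1 : ℕ) : ℝ) := by push_cast; ring
    refine ⟨fun j => (if j < n + 1 then c * β j else 0) -
      (if j = 0 then 0 else c * γ (j - 1)), ?_, ?_⟩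
    · intro t
      have hrec := gegen_contig l hl (k + 2 * n) t
      have hk1 : k + 2 * n + 2 = k + 2 * (n + 1) := by ring
      have hk2 : k + 2 * n + 2 = (k + 2) + 2 * n := by ring
      have hβt := hβ t
      have hγt := hγ t
      rw [hk2] at hrec
      rw [hβt, hγt] at hrec
      rw [show (k + 2) + 2 * n = k + 2 * (n + 1) by ring] at hrec
      rw [hrec]
      simp only [hcast]
      -- RHS of goal: split the sum
      simp only [sub_mul]
      rw [Finset.sum_sub_distrib, mul_sub]
      congr 1
      · conv_rhs => rw [Finset.sum_range_succ]
        rw [if_neg (lt_irrefl (n+1)), zero_mul, add_zero, Finset.mul_sum]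
        apply Finset.sum_congr rfl
        intro x hx
        have hx' : x < n + 1 := Finset.mem_range.mp hx
        rw [if_pos hx', show k + 2 + 2 * (n - x) = k + 2 * (n + 1 - x) by omega]
        ring
      · conv_rhs => rw [Finset.sum_range_succ']
        rw [if_pos rfl, zero_mul, add_zero, Finset.mul_sum]
        apply Finset.sum_congr rfl
        intro x hx
        have hx' : x < n + 1 := Finset.mem_range.mp hx
        rw [if_neg (Nat.succ_ne_zero x)]
        simp only [Nat.add_sub_cancel]
        rw [show k + 2 * (n - x) = k + 2 * (n + 1 - (x + 1)) by omega]
        ring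
    · simp only [Nat.add_sub_cancel, if_neg (Nat.succ_ne_zero n), if_neg (lt_irrefl (n+1)), zero_sub]
      rw [hγn]
      have hGl1 : Real.Gamma (l + 1) = l * Real.Gamma l := Real.Gamma_add_one hl.ne'
      have hGbig : Real.Gamma (l + (k:ℝ) + 2 * ((n+1:ℕ):ℝ) + 1)
          = (l + (k:ℝ) + 2 * n + 2) * Real.Gamma ((l + 1) + (k:ℝ) + 2 * (n:ℝ) + 1) := by
        have h1 : l + (k:ℝ) + 2 * ((n+1:ℕ):ℝ) + 1 = ((l + 1) + (k:ℝ) + 2 * (n:ℝ) + 1) + 1 := by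
          push_cast; ring
        rw [h1, Real.Gamma_add_one (by positivity)]
        ring
      have hGmid : Real.Gamma (l + ((n+1:ℕ):ℝ)) = Real.Gamma ((l + 1) + (n:ℝ)) := by
        congr 1; push_cast; ring
      have hGright : Real.Gamma (l + (k:ℝ) + ((n+1:ℕ):ℝ) + 1)
          = Real.Gamma ((l + 1) + (k:ℝ) + (n:ℝ) + 1) := by
        congr 1; push_cast; ring
      rw [hGbig, hGmid, hGright, hGl1, hc]
      have hGl : Real.Gamma l ≠ 0 := (Real.Gamma_pos_of_pos hl).ne'
      have hG2 : Real.Gamma ((l+1) + (k:ℝ) + 2*(n:ℝ) + 1) ≠ 0 :=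
        (Real.Gamma_pos_of_pos (by positivity)).ne'
      have hd1 : ((k + 2 * n : ℕ) : ℝ) + 2 + l ≠ 0 := by positivity
      have hd2 : l + (k:ℝ) + 2*(n:ℝ) + 2 ≠ 0 := by positivity
      push_cast
      push_cast at hd1
      field_simp
      ring

/-- `C^λ_{k+2m}` expands in the `C^{λ+m}` family with explicit last
coefficient `α_m = (-1)^m (Γ(λ+m)/Γ(λ)) (Γ(λ+k+m+1)/Γ(λ+k+2m+1))`. -/
theorem stmt4 (l : ℝ) (hl : 0 < l) (k m : ℕ) :
    ∃ α : ℕ → ℝ,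
      (∀ t : ℝ, gegenbauer (k + 2 * m) l t =
        ∑ j ∈ Finset.range (m + 1), α j * gegenbauer (k + 2 * (m - j)) (l + m) t) ∧
      α m = (-1 : ℝ) ^ m * (Real.Gamma (l + m) / Real.Gamma l) *
        (Real.Gamma (l + k + m + 1) / Real.Gamma (l + k + 2 * m + 1)) := by
  exact stmt4aux m k l hl
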